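/- Let α be an atom supported in a ball B of radius ≤ b in a locally doubling metric measure space with the AMP property, and let R₀/(1−β) < c < b. Then there exist N atoms a₁,…,a_N supported in balls of radius at most c and scalars λ₁,…,λ_N with |λⱼ| ≤ C such that a = Σⱼ λⱼaⱼ and ‖a‖_{H_c^{1,r}} ≤ C·N, where C and N depend only on M, b, c. -/

import Mathlib

open MeasureTheory Metric Set ENNReal

variable {M : Type*} [MetricSpace M] [MeasurableSpace M]

/-- A `(1,r)`-atom at scale `b`: a function supported in a ball `B` of radius at most
`b`, with vanishing integral and `‖a‖_{L^r} ≤ μ(B)^{1/r}·μ(B)⁻¹` (for `r = ∞` this is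
`‖a‖_∞ ≤ μ(B)⁻¹`). -/
def IsAtomOn (μ : MeasureTheory.Measure M) (r : ℝ≥0∞) (b : ℝ) (a : M → ℝ) : Prop :=
  ∃ (x : M) (s : ℝ), 0 < s ∧ s ≤ b ∧
    (∀ y, y ∉ Metric.ball x s → a y = 0) ∧
    MeasureTheory.Integrable a μ ∧
    (∫ y, a y ∂μ) = 0 ∧
    MeasureTheory.eLpNorm a r μ ≤
      μ (Metric.ball x s) ^ ((1 / r).toReal) * (μ (Metric.ball x s))⁻¹

/-- Membership in the atomic Hardy space `H_b^{1,r}(μ)`: `f = Σ λ_k a_k` with `(1,r)`-atoms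
`a_k` supported in balls of radius ≤ `b`, `Σ|λ_k| < ∞`, the series converging in `L¹(μ)`. -/
def InHardy (μ : MeasureTheory.Measure M) (r : ℝ≥0∞) (b : ℝ) (f : M → ℝ) : Prop :=
  ∃ (c : ℕ → ℝ) (a : ℕ → M → ℝ),
    (∀ n, IsAtomOn μ r b (a n)) ∧ Summable (fun n => |c n|) ∧
    Filter.Tendsto
      (fun N => ∫ x, |f x - ∑ n ∈ Finset.range N, c n * a n x| ∂μ)
      Filter.atTop (nhds 0)

/-- The atomic Hardy norm `‖f‖_{H_b^{1,r}(μ)}`: the infimum of `Σ|λ_k|` over all atomic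
decompositions of `f`. -/
noncomputable def hardyNorm (μ : MeasureTheory.Measure M) (r : ℝ≥0∞) (b : ℝ)
    (f : M → ℝ) : ℝ :=
  sInf {t : ℝ | ∃ (c : ℕ → ℝ) (a : ℕ → M → ℝ),
    (∀ n, IsAtomOn μ r b (a n)) ∧ Summable (fun n => |c n|) ∧
    Filter.Tendsto
      (fun N => ∫ x, |f x - ∑ n ∈ Finset.range N, c n * a n x| ∂μ)
      Filter.atTop (nhds 0) ∧
    (∑' n, |c n|) = t}





lemma aux_ball_pos (μ : Measure M) (hpos : μ Set.univ ≠ 0)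
    (hLD : ∀ b : ℝ, 0 < b → ∃ D : ℝ, ∀ (x : M) (s : ℝ), 0 < s → s ≤ b →
      μ (Metric.ball x (2 * s)) ≤ ENNReal.ofReal D * μ (Metric.ball x s)) :
    ∀ (x : M) (t : ℝ), 0 < t → 0 < μ (ball x t) := by
  intro x t ht
  by_contra h
  push_neg at h
  have h0 : μ (ball x t) = 0 := le_antisymm h (zero_le)
  have key : ∀ n : ℕ, μ (ball x (2 ^ n * t)) = 0 := by
    intro n; induction n with
    | zero => simpa using h0
    | succ n ih =>
      obtain ⟨D, hD⟩ := hLD (2 ^ n * t) (by positivity)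
      have h1 := hD x (2 ^ n * t) (by positivity) le_rfl
      rw [ih, mul_zero] at h1
      have h2 : μ (ball x (2 * (2 ^ n * t))) = 0 := le_antisymm h1 (zero_le)
      have h3 : (2 : ℝ) ^ (n + 1) * t = 2 * (2 ^ n * t) := by ring
      rw [h3]; exact h2
  apply hpos
  have hsub : (Set.univ : Set M) ⊆ ⋃ n : ℕ, ball x (2 ^ n * t) := by
    intro y _
    obtain ⟨n, hn⟩ := pow_unbounded_of_one_lt (dist y x / t) (one_lt_two (α := ℝ))
    rw [div_lt_iff₀ ht] at hn
    exact mem_iUnion.2 ⟨n, by rw [mem_ball]; linarith⟩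
  refine le_antisymm ?_ (zero_le)
  calc μ Set.univ ≤ μ (⋃ n : ℕ, ball x (2 ^ n * t)) := measure_mono hsub
    _ ≤ ∑' n : ℕ, μ (ball x (2 ^ n * t)) := measure_iUnion_le _
    _ = 0 := by simp [key]

lemma aux_doubling_iterate (μ : Measure M)
    (hLD : ∀ b : ℝ, 0 < b → ∃ D : ℝ, ∀ (x : M) (s : ℝ), 0 < s → s ≤ b →
      μ (Metric.ball x (2 * s)) ≤ ENNReal.ofReal D * μ (Metric.ball x s))
    (ρ R : ℝ) (hρ : 0 < ρ) (hρR : ρ ≤ R) :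
    ∃ T : ℝ≥0∞, T ≠ ⊤ ∧ 1 ≤ T ∧
      ∀ x y : M, dist x y ≤ R → μ (ball x R) ≤ T * μ (ball y ρ) := by
  obtain ⟨k, hk⟩ := pow_unbounded_of_one_lt (2 * R / ρ) (one_lt_two (α := ℝ))
  rw [div_lt_iff₀ hρ] at hk
  obtain ⟨D, hD⟩ := hLD (2 ^ k * ρ) (by positivity)
  refine ⟨max 1 ((ENNReal.ofReal D) ^ k), ?_, le_max_left _ _, ?_⟩
  · simp only [ne_eq, max_eq_top, not_or]
    exact ⟨one_ne_top, pow_ne_top ofReal_ne_top⟩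
  intro x y hxy
  have hsub : ball x R ⊆ ball y (2 ^ k * ρ) := by
    intro z hz
    rw [mem_ball] at hz ⊢
    calc dist z y ≤ dist z x + dist x y := dist_triangle _ _ _
      _ < R + R := by linarith
      _ ≤ 2 ^ k * ρ := by linarith
  have hiter : ∀ i : ℕ, i ≤ k →
      μ (ball y (2 ^ i * ρ)) ≤ (ENNReal.ofReal D) ^ i * μ (ball y ρ) := by
    intro i
    induction i with
    | zero => intro _; simp
    | succ i ih =>
      intro hik
      have hik' : i ≤ k := Nat.le_of_succ_le hik
      have h1 := hD y (2 ^ i * ρ) (by positivity)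
        (by
          have : (2:ℝ) ^ i ≤ 2 ^ k := by
            apply pow_le_pow_right₀ one_le_two hik'
          nlinarith)
      have h2 : (2 : ℝ) ^ (i + 1) * ρ = 2 * (2 ^ i * ρ) := by ring
      calc μ (ball y (2 ^ (i + 1) * ρ)) = μ (ball y (2 * (2 ^ i * ρ))) := by rw [h2]
        _ ≤ ENNReal.ofReal D * μ (ball y (2 ^ i * ρ)) := h1
        _ ≤ ENNReal.ofReal D * ((ENNReal.ofReal D) ^ i * μ (ball y ρ)) :=
            mul_le_mul_right (ih hik') _
        _ = (ENNReal.ofReal D) ^ (i + 1) * μ (ball y ρ) := by ring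
  calc μ (ball x R) ≤ μ (ball y (2 ^ k * ρ)) := measure_mono hsub
    _ ≤ (ENNReal.ofReal D) ^ k * μ (ball y ρ) := hiter k le_rfl
    _ ≤ max 1 ((ENNReal.ofReal D) ^ k) * μ (ball y ρ) :=
        mul_le_mul_left (le_max_right _ _) _

lemma aux_phi_compare {p : ℝ} (hp0 : 0 ≤ p) (hp1 : p < 1) {A A' T : ℝ≥0∞}
    (hA0 : A ≠ 0) (hAt : A ≠ ⊤) (hA'0 : A' ≠ 0) (hA't : A' ≠ ⊤) (hT : 1 ≤ T)
    (hle : A' ≤ T * A) : A ^ p * A⁻¹ ≤ T * (A' ^ p * A'⁻¹) := by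
  have e1 : A ^ p * A⁻¹ = A ^ (p - 1) := by
    rw [show p - 1 = p + (-1) by ring, ENNReal.rpow_add _ _ hA0 hAt, ENNReal.rpow_neg_one]
  have e2 : A' ^ p * A'⁻¹ = A' ^ (p - 1) := by
    rw [show p - 1 = p + (-1) by ring, ENNReal.rpow_add _ _ hA'0 hA't, ENNReal.rpow_neg_one]
  rw [e1, e2]
  have key : A ^ (p - 1) * A' ^ (1 - p) ≤ T := by
    have h1 : A ^ (p - 1) = (A ^ (1 - p))⁻¹ := by
      rw [show p - 1 = -(1 - p) by ring, ENNReal.rpow_neg]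
    rw [h1, mul_comm, ← div_eq_mul_inv,
      ← ENNReal.div_rpow_of_nonneg _ _ (by linarith : (0:ℝ) ≤ 1 - p)]
    have hdiv : A' / A ≤ T := ENNReal.div_le_of_le_mul hle
    calc (A' / A) ^ (1 - p) ≤ T ^ (1 - p) := ENNReal.rpow_le_rpow hdiv (by linarith)
      _ ≤ T ^ (1 : ℝ) := ENNReal.rpow_le_rpow_of_exponent_le hT (by linarith)
      _ = T := ENNReal.rpow_one T
  have hA'c : A' ^ (1 - p) * A' ^ (p - 1) = 1 := by
    rw [← ENNReal.rpow_add _ _ hA'0 hA't]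
    norm_num
  calc A ^ (p - 1) = A ^ (p - 1) * (A' ^ (1 - p) * A' ^ (p - 1)) := by rw [hA'c, mul_one]
    _ = A ^ (p - 1) * A' ^ (1 - p) * A' ^ (p - 1) := by ring
    _ ≤ T * A' ^ (p - 1) := mul_le_mul_left key _




lemma aux_chain (R₀ β : ℝ) (hβ0 : 0 < β)
    (hAMP : ∀ x y : M, R₀ < dist x y → ∃ (z : M) (s : ℝ),
      s < β * dist x y ∧ x ∈ Metric.ball z s ∧ y ∈ Metric.ball z s)
    (t : ℝ) (htR : R₀ ≤ t) (ht0 : 0 ≤ t) :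
    ∀ (k : ℕ) (x y : M), dist x y ≤ t / β ^ k →
      ∃ w : ℕ → M, w 0 = x ∧ w (2 ^ k) = y ∧ ∀ i < 2 ^ k, dist (w i) (w (i + 1)) ≤ t := by
  intro k
  induction k with
  | zero =>
    intro x y h
    rw [pow_zero, div_one] at h
    refine ⟨fun i => if i = 0 then x else y, by simp, by simp, ?_⟩
    intro i hi
    interval_cases i
    simpa using h
  | succ k ih =>
    intro x y h
    by_cases hxy : dist x y ≤ t
    · refine ⟨fun i => if i < 2 ^ (k + 1) then x else y, by simp [Nat.pow_pos], by simp, ?_⟩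
      intro i hi
      by_cases h2 : i + 1 < 2 ^ (k + 1)
      · simp only [if_pos hi, if_pos h2, dist_self]; exact ht0
      · simp only [if_pos hi, if_neg h2]; exact hxy
    · push_neg at hxy
      have hR : R₀ < dist x y := lt_of_le_of_lt htR hxy
      obtain ⟨z, s', hs', hxz, hyz⟩ := hAMP x y hR
      have hβk : (0:ℝ) < β ^ k := by positivity
      have hstep : β * (t / β ^ (k + 1)) = t / β ^ k := by
        field_simp
        ring
      have hs'' : s' ≤ t / β ^ k := by
        have h2 : β * dist x y ≤ β * (t / β ^ (k + 1)) :=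
          mul_le_mul_of_nonneg_left h hβ0.le
        rw [hstep] at h2
        linarith
      have hxz' : dist x z ≤ t / β ^ k := by
        rw [mem_ball] at hxz; linarith
      have hyz' : dist z y ≤ t / β ^ k := by
        rw [mem_ball, dist_comm] at hyz; linarith
      obtain ⟨w₁, hw10, hw1e, hw1c⟩ := ih x z hxz'
      obtain ⟨w₂, hw20, hw2e, hw2c⟩ := ih z y hyz'
      have hpow : 2 ^ (k + 1) = 2 ^ k + 2 ^ k := by rw [pow_succ]; ring
      have hpos : 0 < 2 ^ k := Nat.pow_pos (by norm_num)
      refine ⟨fun i => if i ≤ 2 ^ k then w₁ i else w₂ (i - 2 ^ k), by simp [hw10], ?_, ?_⟩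
      · have hn : ¬ (2 ^ (k + 1) ≤ 2 ^ k) := by omega
        simp only [if_neg hn]
        have : 2 ^ (k + 1) - 2 ^ k = 2 ^ k := by omega
        rw [this, hw2e]
      · intro i hi
        rw [hpow] at hi
        by_cases h1 : i + 1 ≤ 2 ^ k
        · have h0 : i ≤ 2 ^ k := by omega
          simp only [if_pos h0, if_pos h1]
          exact hw1c i (by omega)
        · by_cases h0 : i ≤ 2 ^ k
          · have hieq : i = 2 ^ k := by omega
            have hn1 : ¬ (i + 1 ≤ 2 ^ k) := h1
            simp only [if_pos h0, if_neg hn1]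
            have e1 : w₁ i = z := by rw [hieq, hw1e]
            have e2 : i + 1 - 2 ^ k = 1 := by omega
            rw [e1, e2, ← hw20]
            exact hw2c 0 hpos
          · have hn1 : ¬ (i + 1 ≤ 2 ^ k) := by omega
            simp only [if_neg h0, if_neg hn1]
            have e2 : i + 1 - 2 ^ k = (i - 2 ^ k) + 1 := by omega
            rw [e2]
            exact hw2c (i - 2 ^ k) (by omega)

section AuxB
variable [BorelSpace M]




lemma aux_cover (μ : Measure M) (x₀ : M) (s c2 R : ℝ) (T : ℝ≥0∞)
    (hc2 : 0 < c2) (hs0 : 0 < s)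
    (hsR : s + c2 / 2 ≤ R)
    (hm0 : μ (ball x₀ R) ≠ 0) (hmt : μ (ball x₀ R) ≠ ⊤) (hTt : T ≠ ⊤)
    (hT : ∀ y : M, y ∈ ball x₀ s → μ (ball x₀ R) ≤ T * μ (ball y (c2 / 2))) :
    ∃ (mm : ℕ) (xj : ℕ → M), (mm : ℝ≥0∞) ≤ T ∧
      (∀ j < mm, xj j ∈ ball x₀ s) ∧
      ∀ y ∈ ball x₀ s, ∃ j < mm, dist y (xj j) < c2 := by
  classical
  set P : Finset M → Prop := fun F =>
    (↑F ⊆ ball x₀ s) ∧ ∀ u ∈ F, ∀ v ∈ F, u ≠ v → c2 ≤ dist u v with hP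
  -- cardinality bound
  have hcard : ∀ F : Finset M, P F → (F.card : ℝ≥0∞) ≤ T := by
    intro F hF
    have hdisj : (↑F : Set M).PairwiseDisjoint (fun y => ball y (c2 / 2)) := by
      intro u hu v hv huv
      refine Set.disjoint_left.2 fun z hzu hzv => ?_
      rw [mem_ball] at hzu hzv
      have := hF.2 u hu v hv huv
      have hd : dist u v ≤ dist u z + dist z v := dist_triangle _ _ _
      rw [dist_comm u z] at hd
      linarith
    have hsum : F.card • μ (ball x₀ R) ≤ ∑ y ∈ F, (T * μ (ball y (c2 / 2))) :=
      Finset.card_nsmul_le_sum F _ _ (fun y hy => hT y (hF.1 hy))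
    have hunion : ∑ y ∈ F, μ (ball y (c2 / 2)) = μ (⋃ y ∈ F, ball y (c2 / 2)) :=
      (measure_biUnion_finset hdisj (fun y _ => measurableSet_ball)).symm
    have hsub : (⋃ y ∈ F, ball y (c2 / 2)) ⊆ ball x₀ R := by
      intro z hz
      rw [mem_iUnion₂] at hz
      obtain ⟨y, hy, hzy⟩ := hz
      rw [mem_ball] at hzy ⊢
      have : dist y x₀ < s := hF.1 hy
      calc dist z x₀ ≤ dist z y + dist y x₀ := dist_triangle _ _ _
        _ < c2 / 2 + s := by linarith
        _ ≤ R := by linarith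
    have h2 : (F.card : ℝ≥0∞) * μ (ball x₀ R) ≤ T * μ (ball x₀ R) := by
      calc (F.card : ℝ≥0∞) * μ (ball x₀ R) = F.card • μ (ball x₀ R) := (nsmul_eq_mul _ _).symm
        _ ≤ ∑ y ∈ F, (T * μ (ball y (c2 / 2))) := hsum
        _ = T * ∑ y ∈ F, μ (ball y (c2 / 2)) := by rw [Finset.mul_sum]
        _ = T * μ (⋃ y ∈ F, ball y (c2 / 2)) := by rw [hunion]
        _ ≤ T * μ (ball x₀ R) := mul_le_mul_right (measure_mono hsub) _
    exact (ENNReal.mul_le_mul_iff_left hm0 hmt).1 h2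
  -- natural number bound
  have hcardN : ∀ F : Finset M, P F → F.card ≤ ⌈T.toReal⌉₊ := by
    intro F hF
    have h1 := hcard F hF
    have h2 : ((F.card : ℝ≥0∞)).toReal ≤ T.toReal := ENNReal.toReal_mono hTt h1
    rw [show ((F.card : ℝ≥0∞)).toReal = (F.card : ℝ) by simp] at h2
    exact_mod_cast h2.trans (Nat.le_ceil _)
  -- maximal separated family
  set cards : Set ℕ := {n | ∃ F : Finset M, P F ∧ F.card = n} with hcards
  have hne : cards.Nonempty := ⟨0, ∅, ⟨by simp, by simp⟩, rfl⟩
  have hbdd : BddAbove cards := by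
    refine ⟨⌈T.toReal⌉₊, fun n hn => ?_⟩
    obtain ⟨F, hF, rfl⟩ := hn
    exact hcardN F hF
  obtain ⟨F, hF, hFcard⟩ : ∃ F : Finset M, P F ∧ F.card = sSup cards := Nat.sSup_mem hne hbdd
  have hmax : ∀ y ∈ ball x₀ s, ∃ z ∈ F, dist y z < c2 := by
    intro y hy
    by_contra hcon
    push_neg at hcon
    have hyF : y ∉ F := by
      intro hyF
      have := hcon y hyF
      rw [dist_self] at this
      linarith
    have hP' : P (insert y F) := by
      constructor
      · intro u hu
        rcases Finset.mem_insert.1 hu with h | h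
        · subst h; exact hy
        · exact hF.1 h
      · intro u hu v hv huv
        rcases Finset.mem_insert.1 hu with hu' | hu' <;>
          rcases Finset.mem_insert.1 hv with hv' | hv'
        · subst hu'; subst hv'; exact absurd rfl huv
        · subst hu'; exact hcon v hv'
        · subst hv'; rw [dist_comm]; exact hcon u hu'
        · exact hF.2 u hu' v hv' huv
    have : F.card + 1 ∈ cards := ⟨insert y F, hP', Finset.card_insert_of_notMem hyF⟩
    have := le_csSup hbdd this
    omega
  refine ⟨F.card, fun j => F.toList.getD j x₀, hcard F hF, ?_, ?_⟩
  · intro j hj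
    have hj' : j < F.toList.length := by rwa [Finset.length_toList]
    show F.toList.getD j x₀ ∈ ball x₀ s
    rw [List.getD_eq_getElem _ _ hj']
    exact hF.1 (Finset.mem_toList.1 (List.getElem_mem hj'))
  · intro y hy
    obtain ⟨z, hz, hdz⟩ := hmax y hy
    obtain ⟨j, hj, hje⟩ := List.mem_iff_getElem.1 (Finset.mem_toList.2 hz)
    refine ⟨j, by rwa [Finset.length_toList] at hj, ?_⟩
    show dist y (F.toList.getD j x₀) < c2
    rw [List.getD_eq_getElem _ _ hj, hje]
    exact hdz




lemma aux_exp_eq (r : ℝ≥0∞) : 1 / r.toReal = (1 / r).toReal := by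
  rw [ENNReal.toReal_div, ENNReal.toReal_one]

lemma aux_L1_le_one (μ : Measure M) (r : ℝ≥0∞) (hr : 1 ≤ r) (a : M → ℝ) (x₀ : M) (s : ℝ)
    (hsupp : ∀ y, y ∉ ball x₀ s → a y = 0) (hint : Integrable a μ)
    (h0 : μ (ball x₀ s) ≠ 0) (ht : μ (ball x₀ s) ≠ ⊤)
    (hsize : eLpNorm a r μ ≤ μ (ball x₀ s) ^ ((1 / r).toReal) * (μ (ball x₀ s))⁻¹) :
    ∫ y, |a y| ∂μ ≤ 1 := by
  set A := μ (ball x₀ s) with hA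
  set p : ℝ := (1 / r).toReal with hp
  have haind : a = (ball x₀ s).indicator a := by
    funext y
    by_cases h : y ∈ ball x₀ s
    · rw [indicator_of_mem h]
    · rw [indicator_of_notMem h, hsupp y h]
  have h1 : eLpNorm a 1 μ = eLpNorm a 1 (μ.restrict (ball x₀ s)) := by
    conv_lhs => rw [haind]
    exact eLpNorm_indicator_eq_eLpNorm_restrict measurableSet_ball
  have h2 := eLpNorm_le_eLpNorm_mul_rpow_measure_univ (p := 1) (q := r) hr
    (hint.1.restrict (s := ball x₀ s))
  have h3 : eLpNorm a r (μ.restrict (ball x₀ s)) ≤ eLpNorm a r μ :=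
    eLpNorm_mono_measure _ Measure.restrict_le_self
  have hexp : 1 / (1 : ℝ≥0∞).toReal - 1 / r.toReal = 1 - p := by
    rw [ENNReal.toReal_one, aux_exp_eq r, hp]
    norm_num
  have huniv : (μ.restrict (ball x₀ s)) Set.univ = A := by
    rw [Measure.restrict_apply_univ]
  have hle1 : eLpNorm a 1 μ ≤ 1 := by
    rw [h1]
    refine h2.trans ?_
    rw [huniv, hexp]
    calc eLpNorm a r (μ.restrict (ball x₀ s)) * A ^ (1 - p)
        ≤ (A ^ p * A⁻¹) * A ^ (1 - p) :=
          mul_le_mul_left (h3.trans hsize) _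
      _ = (A ^ p * A ^ (1 - p)) * A⁻¹ := by ring
      _ = A ^ (p + (1 - p)) * A⁻¹ := by rw [ENNReal.rpow_add _ _ h0 ht]
      _ = A * A⁻¹ := by norm_num
      _ = 1 := ENNReal.mul_inv_cancel h0 ht
  have heq : ∫ y, |a y| ∂μ = (eLpNorm a 1 μ).toReal := by
    rw [eLpNorm_one_eq_lintegral_enorm, ← integral_norm_eq_lintegral_enorm hint.1]
    simp [Real.norm_eq_abs]
  rw [heq]
  calc (eLpNorm a 1 μ).toReal ≤ (1 : ℝ≥0∞).toReal := ENNReal.toReal_mono one_ne_top hle1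
    _ = 1 := ENNReal.toReal_one

lemma aux_u_props (μ : Measure M) (r : ℝ≥0∞) (w : M) (ρ : ℝ)
    (h0 : μ (ball w ρ) ≠ 0) (ht : μ (ball w ρ) ≠ ⊤) :
    Integrable ((μ (ball w ρ)).toReal⁻¹ • (ball w ρ).indicator (fun _ => (1:ℝ))) μ ∧
    (∫ y, ((μ (ball w ρ)).toReal⁻¹ • (ball w ρ).indicator (fun _ => (1:ℝ))) y ∂μ) = 1 ∧
    eLpNorm ((μ (ball w ρ)).toReal⁻¹ • (ball w ρ).indicator (fun _ => (1:ℝ))) r μ ≤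
      μ (ball w ρ) ^ ((1 / r).toReal) * (μ (ball w ρ))⁻¹ ∧
    (∀ y, y ∉ ball w ρ → ((μ (ball w ρ)).toReal⁻¹ • (ball w ρ).indicator (fun _ => (1:ℝ))) y = 0) := by
  have htoReal_pos : 0 < (μ (ball w ρ)).toReal := ENNReal.toReal_pos h0 ht
  have hind_int : Integrable ((ball w ρ).indicator (fun _ => (1:ℝ))) μ := by
    rw [integrable_indicator_iff measurableSet_ball]
    exact integrableOn_const ht
  refine ⟨hind_int.smul _, ?_, ?_, ?_⟩
  · simp only [Pi.smul_apply, smul_eq_mul]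
    rw [MeasureTheory.integral_const_mul, integral_indicator_const _ measurableSet_ball]
    simp only [smul_eq_mul, mul_one]
    exact inv_mul_cancel₀ (ne_of_gt htoReal_pos)
  · have hnn : (‖(μ (ball w ρ)).toReal⁻¹‖₊ : ℝ≥0∞) = (μ (ball w ρ))⁻¹ := by
      have h1 : ‖(μ (ball w ρ)).toReal⁻¹‖₊ = ((μ (ball w ρ)).toReal⁻¹).toNNReal :=
        (Real.toNNReal_eq_nnnorm_of_nonneg (by positivity)).symm
      rw [h1]
      rw [show (((μ (ball w ρ)).toReal⁻¹.toNNReal) : ℝ≥0∞)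
            = ENNReal.ofReal ((μ (ball w ρ)).toReal⁻¹) from rfl]
      rw [ENNReal.ofReal_inv_of_pos htoReal_pos, ENNReal.ofReal_toReal ht]
    rw [eLpNorm_const_smul, enorm_eq_nnnorm, hnn]
    calc (μ (ball w ρ))⁻¹ * eLpNorm ((ball w ρ).indicator (fun _ => (1:ℝ))) r μ
        ≤ (μ (ball w ρ))⁻¹ * ((‖(1:ℝ)‖₊ : ℝ≥0∞) * μ (ball w ρ) ^ (1 / r.toReal)) :=
          mul_le_mul_right (eLpNorm_indicator_const_le _ _) _
      _ = μ (ball w ρ) ^ ((1 / r).toReal) * (μ (ball w ρ))⁻¹ := by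
          rw [aux_exp_eq r]
          simp [mul_comm]
  · intro y hy
    simp [indicator_of_notMem hy]

end AuxB




lemma aux_zero_atom (μ : Measure M) (r : ℝ≥0∞) (x : M) (c : ℝ) (hc0 : 0 < c) :
    IsAtomOn μ r c (fun _ => 0) := by
  refine ⟨x, c, hc0, le_rfl, fun _ _ => rfl, integrable_zero _ _ _, integral_zero _ _, ?_⟩
  rw [eLpNorm_zero']
  exact zero_le

lemma aux_sum_range_mul {α : Type*} [AddCommMonoid α] (f : ℕ → α) (K q : ℕ) :
    ∑ n ∈ Finset.range (K * q), f n = ∑ j ∈ Finset.range K, ∑ i ∈ Finset.range q, f (j * q + i) := by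
  induction K with
  | zero => simp
  | succ K ih =>
    rw [Nat.succ_mul, Finset.sum_range_add, ih, Finset.sum_range_succ]

lemma aux_hardy_le (μ : Measure M) (r : ℝ≥0∞) (c : ℝ) (N : ℕ) (f : M → ℝ)
    (lam : ℕ → ℝ) (at' : ℕ → M → ℝ)
    (hatom : ∀ n, n < N → IsAtomOn μ r c (at' n))
    (heq : ∀ x, f x = ∑ n ∈ Finset.range N, lam n * at' n x)
    (hzero : IsAtomOn μ r c (fun _ => (0 : ℝ))) :
    hardyNorm μ r c f ≤ ∑ n ∈ Finset.range N, |lam n| := by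
  classical
  set cseq : ℕ → ℝ := fun n => if n < N then lam n else 0 with hcseq
  set aseq : ℕ → M → ℝ := fun n => if n < N then at' n else fun _ => 0 with haseq
  have hzero' : ∀ n, n ∉ Finset.range N → cseq n = 0 := by
    intro n hn
    simp only [hcseq, Finset.mem_range] at hn ⊢
    rw [if_neg hn]
  have habs0 : ∀ n, n ∉ Finset.range N → |cseq n| = 0 := fun n hn => by rw [hzero' n hn, abs_zero]
  have hmem : (∑ n ∈ Finset.range N, |lam n|) ∈
      {t : ℝ | ∃ (cc : ℕ → ℝ) (aa : ℕ → M → ℝ),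
        (∀ n, IsAtomOn μ r c (aa n)) ∧ Summable (fun n => |cc n|) ∧
        Filter.Tendsto
          (fun K => ∫ x, |f x - ∑ n ∈ Finset.range K, cc n * aa n x| ∂μ)
          Filter.atTop (nhds 0) ∧
        (∑' n, |cc n|) = t} := by
    show ∃ (cc : ℕ → ℝ) (aa : ℕ → M → ℝ), _
    refine ⟨cseq, aseq, ?_, ?_, ?_, ?_⟩
    · intro n
      by_cases hn : n < N
      · simpa only [haseq, if_pos hn] using hatom n hn
      · simpa only [haseq, if_neg hn] using hzero
    · exact summable_of_ne_finset_zero habs0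
    · apply tendsto_atTop_of_eventually_const (i₀ := N)
      intro K hK
      have hsum : ∀ x, ∑ n ∈ Finset.range K, cseq n * aseq n x = f x := by
        intro x
        rw [heq x]
        rw [← Finset.sum_subset (Finset.range_subset_range.2 hK)]
        · apply Finset.sum_congr rfl
          intro n hn
          rw [Finset.mem_range] at hn
          simp only [hcseq, haseq, if_pos hn]
        · intro n _ hn
          rw [hzero' n hn, zero_mul]
      have : (fun x => |f x - ∑ n ∈ Finset.range K, cseq n * aseq n x|) = fun _ => 0 := by
        funext x
        rw [hsum x, sub_self, abs_zero]
      rw [this, integral_zero]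
    · rw [tsum_eq_sum habs0]
      apply Finset.sum_congr rfl
      intro n hn
      rw [Finset.mem_range] at hn
      simp only [hcseq, if_pos hn]
  unfold hardyNorm
  apply csInf_le _ hmem
  refine ⟨0, fun x hx => ?_⟩
  obtain ⟨cc, aa, _, _, _, ht⟩ := hx
  rw [← ht]
  exact tsum_nonneg fun n => abs_nonneg _

set_option maxHeartbeats 2000000 in
/-- (Atom decomposition at smaller scales.)  In an unbounded, locally
doubling metric measure space with the approximate midpoint property, given
`R₀/(1−β) < c < b` there exist `C > 0` and `N ∈ ℕ` (depending only on `M, b, c`)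
such that every `(1,r)`-atom `a` supported in a ball of radius `≤ b` can be written
`a = Σ_{j<N} λⱼ aⱼ` with `(1,r)`-atoms `aⱼ` supported in balls of radius `≤ c`,
`|λⱼ| ≤ C`, and `‖a‖_{H_c^{1,r}} ≤ C·N`. -/
theorem atom_decomposition_small_scale
    {M : Type*} [MetricSpace M] [MeasurableSpace M] [BorelSpace M]
    (μ : Measure M)
    (hpos : μ Set.univ ≠ 0)
    (hballs : ∀ (x : M) (r : ℝ), μ (Metric.ball x r) < ⊤)
    (hunb : ¬ Bornology.IsBounded (Set.univ : Set M))
    (hLD : ∀ b : ℝ, 0 < b → ∃ D : ℝ, ∀ (x : M) (s : ℝ), 0 < s → s ≤ b →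
      μ (Metric.ball x (2 * s)) ≤ ENNReal.ofReal D * μ (Metric.ball x s))
    (R₀ β : ℝ) (hR₀ : 0 ≤ R₀) (hβ₁ : 1 / 2 < β) (hβ₂ : β < 1)
    (hAMP : ∀ x y : M, R₀ < dist x y → ∃ (z : M) (s : ℝ),
      s < β * dist x y ∧ x ∈ Metric.ball z s ∧ y ∈ Metric.ball z s)
    (r : ℝ≥0∞) (hr : 1 < r)
    (b c : ℝ) (hc : R₀ / (1 - β) < c) (hcb : c < b) :
    ∃ (C : ℝ) (N : ℕ), 0 < C ∧
      ∀ a : M → ℝ, IsAtomOn μ r b a →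
        ∃ (lam : ℕ → ℝ) (at' : ℕ → M → ℝ),
          (∀ j, j < N → IsAtomOn μ r c (at' j)) ∧
          (∀ j, j < N → |lam j| ≤ C) ∧
          (∀ x, a x = ∑ j ∈ Finset.range N, lam j * at' j x) ∧
          hardyNorm μ r c a ≤ C * N := by
  classical
  -- basic constants
  have hβ0 : (0:ℝ) < β := by linarith
  have h1β : (0:ℝ) < 1 - β := by linarith
  have hc0 : (0:ℝ) < c := lt_of_le_of_lt (div_nonneg hR₀ h1β.le) hc
  have hb0 : (0:ℝ) < b := lt_trans hc0 hcb
  have hR0c : R₀ < c := by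
    have h1 : R₀ ≤ R₀ / (1 - β) := by
      rw [le_div_iff₀ h1β]; nlinarith
    linarith
  set t : ℝ := max R₀ (c / 2) with htdef
  have htc : t < c := max_lt hR0c (by linarith)
  have htchalf : c / 2 ≤ t := le_max_right _ _
  have ht0 : (0:ℝ) < t := lt_of_lt_of_le (by linarith) htchalf
  have htR : R₀ ≤ t := le_max_left _ _
  set ρ : ℝ := (c - t) / 2 with hρdef
  have hρ0 : (0:ℝ) < ρ := by rw [hρdef]; linarith
  have hρc4 : ρ ≤ c / 4 := by rw [hρdef]; linarith
  have htρ : t + 2 * ρ ≤ c := by rw [hρdef]; linarith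
  -- exponent facts
  set p : ℝ := (1 / r).toReal with hpdef
  have hp0 : 0 ≤ p := ENNReal.toReal_nonneg
  have hr1 : (1:ℝ≥0∞) ≤ r := hr.le
  have hp1 : p < 1 := by
    have hinv : 1 / r < 1 := by
      rw [one_div]; exact ENNReal.inv_lt_one.2 hr
    have h2 := (ENNReal.toReal_lt_toReal (lt_of_lt_of_le hinv le_top).ne one_ne_top).2 hinv
    rw [ENNReal.toReal_one] at h2
    exact h2
  -- doubling constant
  set R : ℝ := 2 * b + 2 * c + 1 with hRdef
  have hR0' : (0:ℝ) < R := by rw [hRdef]; linarith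
  obtain ⟨T, hTt, hT1, hT⟩ := aux_doubling_iterate μ hLD ρ R hρ0 (by rw [hRdef]; linarith)
  -- chain depth
  obtain ⟨k₁, hk₁⟩ := exists_pow_lt_of_lt_one
    (show (0:ℝ) < t / (2 * b + 1) by positivity) hβ₂
  set L : ℕ := 2 ^ k₁ with hLdef
  have hchain_bound : 2 * b + 1 ≤ t / β ^ k₁ := by
    have hβk : (0:ℝ) < β ^ k₁ := by positivity
    rw [le_div_iff₀ hβk]
    rw [lt_div_iff₀ (by linarith : (0:ℝ) < 2 * b + 1)] at hk₁
    nlinarith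
  -- constants
  set K : ℕ := max 1 ⌈T.toReal⌉₊ with hKdef
  set N : ℕ := K * (L + 1) with hNdef
  set CE : ℝ≥0∞ := 2 * T with hCEdef
  have hCEt : CE ≠ ⊤ := by
    rw [hCEdef]
    exact ENNReal.mul_ne_top (by norm_num) hTt
  have hCE2 : (2:ℝ≥0∞) ≤ CE := by
    rw [hCEdef]
    calc (2:ℝ≥0∞) = 2 * 1 := (mul_one _).symm
      _ ≤ 2 * T := mul_le_mul_right hT1 _
  have hCE0 : CE ≠ 0 := by
    intro h; rw [h] at hCE2; exact absurd hCE2 (by norm_num)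
  set C : ℝ := CE.toReal with hCdef
  have hCE_of : ENNReal.ofReal C = CE := ENNReal.ofReal_toReal hCEt
  have hC2 : (2:ℝ) ≤ C := by
    have := ENNReal.toReal_mono hCEt hCE2
    simpa using this
  have hC0 : (0:ℝ) < C := by linarith
  have hC1 : (1:ℝ) ≤ C := by linarith
  have hK1 : 1 ≤ K := le_max_left _ _
  have hN1 : 1 ≤ N := by
    rw [hNdef]
    calc 1 = 1 * 1 := rfl
      _ ≤ K * (L + 1) := Nat.mul_le_mul hK1 (Nat.succ_le_succ (Nat.zero_le L))
  have hCNnn : (‖C⁻¹‖₊ : ℝ≥0∞) = CE⁻¹ := by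
    rw [← enorm_eq_nnnorm, Real.enorm_eq_ofReal_abs, abs_of_pos (inv_pos.2 hC0),
      ENNReal.ofReal_inv_of_pos hC0, hCE_of]
  -- ball measure facts
  have hballpos := aux_ball_pos μ hpos hLD
  have hballne : ∀ (x : M) (ss : ℝ), 0 < ss → μ (ball x ss) ≠ 0 :=
    fun x ss h => (hballpos x ss h).ne'
  have hballt : ∀ (x : M) (ss : ℝ), μ (ball x ss) ≠ ⊤ := fun x ss => (hballs x ss).ne
  refine ⟨C, N, hC0, ?_⟩
  intro a ha
  obtain ⟨x₀, s, hs0, hsb, hsupp, hint, hint0, hsize⟩ := ha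
  have hzeroatom : IsAtomOn μ r c (fun _ => (0:ℝ)) := aux_zero_atom μ r x₀ c hc0
  have hCN1 : (1:ℝ) ≤ C * N := by
    have h1 : (1:ℝ) ≤ (N:ℝ) := by exact_mod_cast hN1
    nlinarith
  by_cases hsc : s ≤ c
  · -- a is already an atom at scale c
    have hatomc : IsAtomOn μ r c a := ⟨x₀, s, hs0, hsc, hsupp, hint, hint0, hsize⟩
    set lam : ℕ → ℝ := fun n => if n = 0 then 1 else 0 with hlamdef
    set at' : ℕ → M → ℝ := fun n => if n = 0 then a else fun _ => 0 with hatdef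
    have hatoms : ∀ j, j < N → IsAtomOn μ r c (at' j) := by
      intro j _
      by_cases h : j = 0
      · simpa [hatdef, h] using hatomc
      · simpa [hatdef, h] using hzeroatom
    have hpoint : ∀ x, a x = ∑ j ∈ Finset.range N, lam j * at' j x := by
      intro x
      rw [Finset.sum_eq_single 0]
      · simp [hlamdef, hatdef]
      · intro n _ hn; simp [hlamdef, hn]
      · intro h
        exact absurd (Finset.mem_range.2 (lt_of_lt_of_le Nat.zero_lt_one hN1)) h
    refine ⟨lam, at', hatoms, ?_, hpoint, ?_⟩
    · intro j _
      by_cases h : j = 0 <;> simp [hlamdef, h] <;> linarith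
    · have hle := aux_hardy_le μ r c N a lam at' hatoms hpoint hzeroatom
      refine hle.trans ?_
      have hsum1 : ∑ n ∈ Finset.range N, |lam n| = 1 := by
        rw [Finset.sum_eq_single 0]
        · simp [hlamdef]
        · intro n _ hn; simp [hlamdef, hn]
        · intro h
          exact absurd (Finset.mem_range.2 (lt_of_lt_of_le Nat.zero_lt_one hN1)) h
      rw [hsum1]; exact hCN1
  · push_neg at hsc  -- c < s
    have hμB0 : μ (ball x₀ s) ≠ 0 := hballne _ _ hs0
    have hμBt : μ (ball x₀ s) ≠ ⊤ := hballt _ _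
    have hL1 : ∫ y, |a y| ∂μ ≤ 1 :=
      aux_L1_le_one μ r hr1 a x₀ s hsupp hint hμB0 hμBt hsize
    -- covering
    obtain ⟨mm, xj, hmmT, hxjmem, hcovall⟩ :=
      aux_cover μ x₀ s (c/2) R T (by linarith) hs0 (by rw [hRdef]; linarith)
        (hballne _ _ hR0') (hballt _ _) hTt
        (by
          intro y hy
          rw [mem_ball] at hy
          have h1 := hT x₀ y (by rw [dist_comm]; linarith [hy])
          refine h1.trans (mul_le_mul_right (measure_mono (ball_subset_ball ?_)) _)
          linarith)
    have hmmK : mm ≤ K := by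
      have h2 : (mm : ℝ) ≤ T.toReal := by
        have := ENNReal.toReal_mono hTt hmmT
        simpa using this
      have h3 : mm ≤ ⌈T.toReal⌉₊ := by exact_mod_cast h2.trans (Nat.le_ceil _)
      exact h3.trans (le_max_right _ _)
    -- partition
    set E : ℕ → Set M := fun j =>
      (ball (xj j) (c/2) ∩ ball x₀ s) \ ⋃ (i : ℕ) (_ : i < j), ball (xj i) (c/2) with hEdef
    have hEmeas : ∀ j, MeasurableSet (E j) := by
      intro j
      apply MeasurableSet.diff
      · exact measurableSet_ball.inter measurableSet_ball
      · exact MeasurableSet.iUnion fun i => MeasurableSet.iUnion fun _ => measurableSet_ball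
    have hEsub : ∀ j, E j ⊆ ball (xj j) (c/2) := fun j y hy => hy.1.1
    have hEsub₀ : ∀ j, E j ⊆ ball x₀ s := fun j y hy => hy.1.2
    have hcover_unique : ∀ y ∈ ball x₀ s,
        ∃ j, j < mm ∧ y ∈ E j ∧ ∀ j', j' < mm → j' ≠ j → y ∉ E j' := by
      intro y hy
      have hexQ : ∃ j, j < mm ∧ dist y (xj j) < c / 2 := hcovall y hy
      set j₀ := Nat.find hexQ with hj₀def
      have hQ := Nat.find_spec hexQ
      have hmin : ∀ i, i < j₀ → ¬ (i < mm ∧ dist y (xj i) < c / 2) :=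
        fun i hi => Nat.find_min hexQ hi
      refine ⟨j₀, hQ.1, ⟨⟨mem_ball.2 hQ.2, hy⟩, ?_⟩, ?_⟩
      · intro hmem
        rw [mem_iUnion₂] at hmem
        obtain ⟨i, hi, hyi⟩ := hmem
        exact (hmin i hi) ⟨lt_trans hi hQ.1, mem_ball.1 hyi⟩
      · intro j' hj' hne hmem
        rcases lt_or_gt_of_ne hne with h | h
        · exact (hmin j' h) ⟨hj', mem_ball.1 (hEsub j' hmem)⟩
        · exact hmem.2 (mem_iUnion₂.2 ⟨j₀, h, mem_ball.2 hQ.2⟩)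
    have hpart : ∀ x, ∑ j ∈ Finset.range mm, (E j).indicator a x = a x := by
      intro x
      by_cases hx : x ∈ ball x₀ s
      · obtain ⟨j₀, hj₀, hxj₀, huniq⟩ := hcover_unique x hx
        rw [Finset.sum_eq_single_of_mem j₀ (Finset.mem_range.2 hj₀)]
        · exact indicator_of_mem hxj₀ a
        · intro j hj hne
          exact indicator_of_notMem (huniq j (Finset.mem_range.1 hj) hne) a
      · rw [hsupp x hx]
        apply Finset.sum_eq_zero
        intro j _
        exact indicator_of_notMem (fun hmem => hx (hEsub₀ j hmem)) a
    -- masses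
    set mval : ℕ → ℝ := fun j => ∫ y, (E j).indicator a y ∂μ with hmvaldef
    have hindint : ∀ j, Integrable ((E j).indicator a) μ :=
      fun j => hint.indicator (hEmeas j)
    have hmsum : ∑ j ∈ Finset.range mm, mval j = 0 := by
      calc ∑ j ∈ Finset.range mm, mval j
          = ∫ y, (∑ j ∈ Finset.range mm, (E j).indicator a y) ∂μ :=
            (integral_finset_sum _ (fun j _ => hindint j)).symm
        _ = ∫ y, a y ∂μ := by
            congr 1
            funext y
            exact hpart y
        _ = 0 := hint0
    have hm1 : ∀ j, |mval j| ≤ 1 := by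
      intro j
      have h1 : |mval j| ≤ ∫ y, |(E j).indicator a y| ∂μ := by
        simpa [Real.norm_eq_abs] using
          norm_integral_le_integral_norm (μ := μ) ((E j).indicator a)
      refine h1.trans (le_trans ?_ hL1)
      apply integral_mono_of_nonneg (Filter.Eventually.of_forall fun y => abs_nonneg _)
        hint.abs (Filter.Eventually.of_forall fun y => ?_)
      simpa [Real.norm_eq_abs] using norm_indicator_le_norm_self (f := a) (s := E j) (a := y)
    have hmnorm : ∀ j, (‖mval j‖₊ : ℝ≥0∞) ≤ 1 := by
      intro j
      rw [← enorm_eq_nnnorm, Real.enorm_eq_ofReal_abs]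
      calc ENNReal.ofReal |mval j| ≤ ENNReal.ofReal 1 := ENNReal.ofReal_le_ofReal (hm1 j)
        _ = 1 := ENNReal.ofReal_one
    -- normalized bump functions
    set u : M → M → ℝ :=
      fun w => (μ (ball w ρ)).toReal⁻¹ • (ball w ρ).indicator (fun _ => (1:ℝ)) with hudef
    have hu : ∀ w : M, Integrable (u w) μ ∧ (∫ y, u w y ∂μ) = 1 ∧
        eLpNorm (u w) r μ ≤ μ (ball w ρ) ^ ((1 / r).toReal) * (μ (ball w ρ))⁻¹ ∧
        (∀ y, y ∉ ball w ρ → u w y = 0) :=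
      fun w => aux_u_props μ r w ρ (hballne _ _ hρ0) (hballt _ _)
    -- chains
    have hchain : ∀ j, ∃ w : ℕ → M,
        (j < mm → (w 0 = xj j ∧ w L = x₀ ∧ ∀ i < L, dist (w i) (w (i+1)) ≤ t)) := by
      intro j
      by_cases hj : j < mm
      · obtain ⟨w, hw0, hwL, hwc⟩ := aux_chain R₀ β hβ0 hAMP t htR ht0.le k₁ (xj j) x₀
          (by
            have hmem := hxjmem j hj
            rw [mem_ball] at hmem
            have : dist (xj j) x₀ < s := hmem
            linarith [hchain_bound])
        exact ⟨w, fun _ => ⟨hw0, hwL, hwc⟩⟩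
      · exact ⟨fun _ => x₀, fun h => absurd h hj⟩
    choose w hw using hchain
    -- the atoms
    set g : ℕ → M → ℝ := fun j => (E j).indicator a - mval j • u (xj j) with hgdef
    set piece : ℕ → M → ℝ := fun n =>
      if n / (L+1) < mm then
        (if n % (L+1) = 0 then g (n / (L+1))
         else u (w (n / (L+1)) (n % (L+1) - 1)) - u (w (n / (L+1)) (n % (L+1))))
      else fun _ => 0 with hpiecedef
    set lam : ℕ → ℝ := fun n =>
      if n / (L+1) < mm then (if n % (L+1) = 0 then C else C * mval (n / (L+1))) else 0
      with hlamdef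
    set at' : ℕ → M → ℝ := fun n => C⁻¹ • piece n with hatdef
    have hg_apply : ∀ j, g j = (E j).indicator a - mval j • u (xj j) := fun j => rfl
    have hlam_apply : ∀ n, lam n =
        (if n / (L+1) < mm then (if n % (L+1) = 0 then C else C * mval (n / (L+1))) else 0) :=
      fun n => rfl
    have hpiece_apply : ∀ n, piece n =
        (if n / (L+1) < mm then
          (if n % (L+1) = 0 then g (n / (L+1))
           else u (w (n / (L+1)) (n % (L+1) - 1)) - u (w (n / (L+1)) (n % (L+1))))
         else fun _ => 0) := fun n => rfl
    have hat_apply : ∀ n, at' n = C⁻¹ • piece n := fun n => rfl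
    -- index arithmetic
    have hidx_div : ∀ j i, i < L + 1 → (j * (L+1) + i) / (L+1) = j := by
      intro j i hi
      rw [mul_comm j (L+1), Nat.mul_add_div (by omega), Nat.div_eq_of_lt hi, add_zero]
    have hidx_mod : ∀ j i, i < L + 1 → (j * (L+1) + i) % (L+1) = i := by
      intro j i hi
      rw [mul_comm j (L+1), Nat.mul_add_mod, Nat.mod_eq_of_lt hi]
    -- product formula
    have hprod : ∀ n x, lam n * at' n x =
        (if n / (L+1) < mm then
          (if n % (L+1) = 0 then g (n / (L+1)) x
           else mval (n / (L+1)) *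
            (u (w (n / (L+1)) (n % (L+1) - 1)) x - u (w (n / (L+1)) (n % (L+1))) x))
         else 0) := by
      intro n x
      rw [hlam_apply, hat_apply, hpiece_apply]
      by_cases h1 : n / (L+1) < mm
      · by_cases h2 : n % (L+1) = 0
        · simp only [h1, h2, if_true, if_pos]
          rw [Pi.smul_apply, smul_eq_mul]
          field_simp
        · simp only [h1, h2, if_true, if_false, if_pos, if_neg]
          rw [Pi.smul_apply, smul_eq_mul, Pi.sub_apply]
          field_simp
      · simp only [h1, if_false, if_neg]
        rw [Pi.smul_apply, smul_eq_mul]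
        simp
    -- atom property
    have hatoms : ∀ n, n < N → IsAtomOn μ r c (at' n) := by
      intro n _
      by_cases hjm : n / (L+1) < mm
      · set j := n / (L+1) with hjdef
        set i := n % (L+1) with hidef
        have hiL : i < L + 1 := Nat.mod_lt _ (Nat.succ_pos L)
        by_cases hi0 : i = 0
        · -- main atom from g j
          have hpieceeq : piece n = g j := by
            rw [hpiece_apply]
            simp only [← hjdef, ← hidef, hjm, hi0, if_true, if_pos]
          obtain ⟨huint, huI, huN, husupp⟩ := hu (xj j)
          have hgint : Integrable (g j) μ := by
            rw [hg_apply]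
            exact (hindint j).sub (huint.smul (mval j))
          refine ⟨xj j, c/2, by linarith, by linarith, ?_, ?_, ?_, ?_⟩
          · intro y hy
            rw [hat_apply, hpieceeq]
            have h1 : (E j).indicator a y = 0 :=
              indicator_of_notMem (fun hmem => hy (hEsub j hmem)) a
            have h2 : u (xj j) y = 0 :=
              husupp y (fun hmem => hy (ball_subset_ball (by linarith) hmem))
            rw [hg_apply]
            simp [h1, h2]
          · rw [hat_apply, hpieceeq]
            exact hgint.smul C⁻¹
          · rw [hat_apply, hpieceeq]
            simp only [Pi.smul_apply, smul_eq_mul]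
            rw [MeasureTheory.integral_const_mul]
            have hig : ∫ y, g j y ∂μ = 0 := by
              rw [hg_apply]
              have : ∫ y, ((E j).indicator a - mval j • u (xj j)) y ∂μ
                  = (∫ y, (E j).indicator a y ∂μ) - ∫ y, (mval j • u (xj j)) y ∂μ :=
                integral_sub (hindint j) (huint.smul (mval j))
              rw [this]
              have h2 : ∫ y, (mval j • u (xj j)) y ∂μ = mval j := by
                simp only [Pi.smul_apply, smul_eq_mul]
                rw [MeasureTheory.integral_const_mul, huI, mul_one]
              rw [h2, show (∫ y, (E j).indicator a y ∂μ) = mval j from rfl, sub_self]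
            rw [hig, mul_zero]
          · rw [hat_apply, hpieceeq, eLpNorm_const_smul, enorm_eq_nnnorm, hCNnn]
            set A' := μ (ball (xj j) (c/2)) with hA'def
            have hA'0 : A' ≠ 0 := hballne _ _ (by linarith)
            have hA't : A' ≠ ⊤ := hballt _ _
            have hAle : A' ≤ T * μ (ball x₀ s) := by
              have hsub1 : ball (xj j) (c/2) ⊆ ball x₀ R := by
                intro z hz
                rw [mem_ball] at hz ⊢
                have hmem := hxjmem j hjm
                rw [mem_ball] at hmem
                calc dist z x₀ ≤ dist z (xj j) + dist (xj j) x₀ := dist_triangle _ _ _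
                  _ < c/2 + s := by linarith
                  _ ≤ R := by rw [hRdef]; linarith
              calc A' ≤ μ (ball x₀ R) := measure_mono hsub1
                _ ≤ T * μ (ball x₀ ρ) := hT x₀ x₀ (by rw [dist_self]; linarith)
                _ ≤ T * μ (ball x₀ s) :=
                    mul_le_mul_right (measure_mono (ball_subset_ball (by linarith))) _
            have hA'le : A' ≤ T * μ (ball (xj j) ρ) := by
              calc A' ≤ μ (ball (xj j) R) :=
                    measure_mono (ball_subset_ball (by rw [hRdef]; linarith))
                _ ≤ T * μ (ball (xj j) ρ) := hT _ _ (by rw [dist_self]; linarith)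
            have hφ1 : μ (ball x₀ s) ^ p * (μ (ball x₀ s))⁻¹ ≤ T * (A' ^ p * A'⁻¹) :=
              aux_phi_compare hp0 hp1 hμB0 hμBt hA'0 hA't hT1 hAle
            have hφ2 : μ (ball (xj j) ρ) ^ p * (μ (ball (xj j) ρ))⁻¹ ≤ T * (A' ^ p * A'⁻¹) :=
              aux_phi_compare hp0 hp1 (hballne _ _ hρ0) (hballt _ _) hA'0 hA't hT1 hA'le
            have hge : eLpNorm (g j) r μ ≤ CE * (A' ^ p * A'⁻¹) := by
              have htri : eLpNorm (g j) r μ ≤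
                  eLpNorm ((E j).indicator a) r μ + eLpNorm (mval j • u (xj j)) r μ := by
                rw [hg_apply]
                exact eLpNorm_sub_le (hint.1.indicator (hEmeas j))
                  (huint.1.const_smul (mval j)) hr1
              have h1 : eLpNorm ((E j).indicator a) r μ ≤
                  μ (ball x₀ s) ^ p * (μ (ball x₀ s))⁻¹ :=
                (eLpNorm_indicator_le a).trans hsize
              have h2 : eLpNorm (mval j • u (xj j)) r μ ≤
                  μ (ball (xj j) ρ) ^ p * (μ (ball (xj j) ρ))⁻¹ := by
                rw [eLpNorm_const_smul]
                calc (‖mval j‖₊ : ℝ≥0∞) * eLpNorm (u (xj j)) r μ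
                    ≤ 1 * (μ (ball (xj j) ρ) ^ p * (μ (ball (xj j) ρ))⁻¹) :=
                      mul_le_mul' (hmnorm j) huN
                  _ = _ := one_mul _
              calc eLpNorm (g j) r μ
                  ≤ μ (ball x₀ s) ^ p * (μ (ball x₀ s))⁻¹ +
                    μ (ball (xj j) ρ) ^ p * (μ (ball (xj j) ρ))⁻¹ :=
                    htri.trans (add_le_add h1 h2)
                _ ≤ T * (A' ^ p * A'⁻¹) + T * (A' ^ p * A'⁻¹) := add_le_add hφ1 hφ2
                _ = CE * (A' ^ p * A'⁻¹) := by rw [hCEdef]; ring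
            calc CE⁻¹ * eLpNorm (g j) r μ ≤ CE⁻¹ * (CE * (A' ^ p * A'⁻¹)) :=
                  mul_le_mul_right hge _
              _ = A' ^ p * A'⁻¹ := by
                  rw [← mul_assoc, ENNReal.inv_mul_cancel hCE0 hCEt, one_mul]
              _ = A' ^ ((1/r).toReal) * A'⁻¹ := by rw [hpdef]
        · -- chain atom
          obtain ⟨hw0, hwL, hwc⟩ := hw j hjm
          set wv := w j (i - 1) with hwvdef
          set wv' := w j i with hwv'def
          have hi1 : 1 ≤ i := Nat.one_le_iff_ne_zero.2 hi0
          have hconsec : dist wv wv' ≤ t := by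
            have h1 := hwc (i - 1) (by omega)
            have h2 : i - 1 + 1 = i := by omega
            rw [h2] at h1
            exact h1
          have hpieceeq : piece n = u wv - u wv' := by
            rw [hpiece_apply]
            simp only [← hjdef, ← hidef, hjm, hi0, if_true, if_false, if_pos, if_neg]
            rfl
          obtain ⟨huint1, huI1, huN1, husupp1⟩ := hu wv
          obtain ⟨huint2, huI2, huN2, husupp2⟩ := hu wv'
          refine ⟨wv, c, hc0, le_rfl, ?_, ?_, ?_, ?_⟩
          · intro y hy
            rw [mem_ball] at hy
            push_neg at hy
            have h1 : u wv y = 0 := husupp1 y (by rw [mem_ball]; push_neg; linarith)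
            have h2 : u wv' y = 0 := by
              apply husupp2 y
              intro hmem
              rw [mem_ball] at hmem
              have htr : dist y wv ≤ dist y wv' + dist wv' wv := dist_triangle _ _ _
              rw [dist_comm wv' wv] at htr
              linarith
            rw [hat_apply, hpieceeq]
            simp [h1, h2]
          · rw [hat_apply, hpieceeq]
            exact ((huint1.sub huint2).smul C⁻¹)
          · rw [hat_apply, hpieceeq]
            simp only [Pi.smul_apply, smul_eq_mul]
            rw [MeasureTheory.integral_const_mul]
            have hiz : ∫ y, (u wv - u wv') y ∂μ = 0 := by
              have h3 := integral_sub huint1 huint2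
              simp only [Pi.sub_apply] at h3 ⊢
              rw [h3, huI1, huI2, sub_self]
            rw [hiz, mul_zero]
          · rw [hat_apply, hpieceeq, eLpNorm_const_smul, enorm_eq_nnnorm, hCNnn]
            set A' := μ (ball wv c) with hA'def
            have hA'0 : A' ≠ 0 := hballne _ _ hc0
            have hA't : A' ≠ ⊤ := hballt _ _
            have hA1 : A' ≤ T * μ (ball wv ρ) := by
              calc A' ≤ μ (ball wv R) :=
                    measure_mono (ball_subset_ball (by rw [hRdef]; linarith))
                _ ≤ T * μ (ball wv ρ) := hT _ _ (by rw [dist_self]; linarith)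
            have hA2 : A' ≤ T * μ (ball wv' ρ) := by
              have hsub1 : ball wv c ⊆ ball wv' R := by
                intro z hz
                rw [mem_ball] at hz ⊢
                calc dist z wv' ≤ dist z wv + dist wv wv' := dist_triangle _ _ _
                  _ < c + t := by linarith
                  _ ≤ R := by rw [hRdef]; linarith
              calc A' ≤ μ (ball wv' R) := measure_mono hsub1
                _ ≤ T * μ (ball wv' ρ) := hT _ _ (by rw [dist_self]; linarith)
            have hφ1 : μ (ball wv ρ) ^ p * (μ (ball wv ρ))⁻¹ ≤ T * (A' ^ p * A'⁻¹) :=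
              aux_phi_compare hp0 hp1 (hballne _ _ hρ0) (hballt _ _) hA'0 hA't hT1 hA1
            have hφ2 : μ (ball wv' ρ) ^ p * (μ (ball wv' ρ))⁻¹ ≤ T * (A' ^ p * A'⁻¹) :=
              aux_phi_compare hp0 hp1 (hballne _ _ hρ0) (hballt _ _) hA'0 hA't hT1 hA2
            have hge : eLpNorm (u wv - u wv') r μ ≤ CE * (A' ^ p * A'⁻¹) := by
              have htri : eLpNorm (u wv - u wv') r μ ≤
                  eLpNorm (u wv) r μ + eLpNorm (u wv') r μ :=
                eLpNorm_sub_le huint1.1 huint2.1 hr1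
              calc eLpNorm (u wv - u wv') r μ
                  ≤ μ (ball wv ρ) ^ p * (μ (ball wv ρ))⁻¹ +
                    μ (ball wv' ρ) ^ p * (μ (ball wv' ρ))⁻¹ := htri.trans (add_le_add huN1 huN2)
                _ ≤ T * (A' ^ p * A'⁻¹) + T * (A' ^ p * A'⁻¹) := add_le_add hφ1 hφ2
                _ = CE * (A' ^ p * A'⁻¹) := by rw [hCEdef]; ring
            calc CE⁻¹ * eLpNorm (u wv - u wv') r μ ≤ CE⁻¹ * (CE * (A' ^ p * A'⁻¹)) :=
                  mul_le_mul_right hge _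
              _ = A' ^ p * A'⁻¹ := by
                  rw [← mul_assoc, ENNReal.inv_mul_cancel hCE0 hCEt, one_mul]
              _ = A' ^ ((1/r).toReal) * A'⁻¹ := by rw [hpdef]
      · -- padding: zero atom
        have hz : at' n = fun _ => (0:ℝ) := by
          funext x
          rw [hat_apply, hpiece_apply]
          simp [hjm]
        rw [hz]
        exact hzeroatom
    -- coefficient bound
    have hlambd : ∀ n, n < N → |lam n| ≤ C := by
      intro n _
      rw [hlam_apply]
      by_cases h1 : n / (L+1) < mm
      · by_cases h2 : n % (L+1) = 0
        · simp only [h1, h2, if_true, if_pos]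
          rw [abs_of_pos hC0]
        · simp only [h1, h2, if_true, if_false, if_pos, if_neg]
          rw [abs_mul, abs_of_pos hC0]
          calc C * |mval (n / (L+1))| ≤ C * 1 :=
              mul_le_mul_of_nonneg_left (hm1 _) hC0.le
            _ = C := mul_one C
      · simp only [h1, if_false, if_neg]
        rw [abs_zero]; linarith
    -- the pointwise identity
    have hpoint : ∀ x, a x = ∑ n ∈ Finset.range N, lam n * at' n x := by
      intro x
      rw [hNdef, aux_sum_range_mul (fun n => lam n * at' n x) K (L+1)]
      have hinner : ∀ j, j < K →
          ∑ i ∈ Finset.range (L+1), lam (j*(L+1)+i) * at' (j*(L+1)+i) x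
          = if j < mm then (E j).indicator a x - mval j * u x₀ x else 0 := by
        intro j hjK
        by_cases hjm : j < mm
        · rw [if_pos hjm]
          obtain ⟨hw0, hwL, _⟩ := hw j hjm
          rw [Finset.sum_range_succ' (fun i => lam (j*(L+1)+i) * at' (j*(L+1)+i) x) L]
          have h0 : lam (j*(L+1)+0) * at' (j*(L+1)+0) x = g j x := by
            rw [hprod]
            simp only [hidx_div j 0 (Nat.succ_pos L), hidx_mod j 0 (Nat.succ_pos L), hjm, if_true, if_pos]
          have hterm : ∀ i, i < L → lam (j*(L+1)+(i+1)) * at' (j*(L+1)+(i+1)) x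
              = mval j * u (w j i) x - mval j * u (w j (i+1)) x := by
            intro i hi
            rw [hprod]
            simp only [hidx_div j (i+1) (Nat.succ_lt_succ hi), hidx_mod j (i+1) (Nat.succ_lt_succ hi),
              hjm, Nat.succ_ne_zero, if_true, if_false, if_pos, if_neg]
            rw [show i + 1 - 1 = i from rfl]
            ring
          rw [Finset.sum_congr rfl (fun i hi => hterm i (Finset.mem_range.1 hi)), h0]
          rw [Finset.sum_range_sub' (fun i => mval j * u (w j i) x) L]
          rw [hw0, hwL]
          rw [hg_apply]
          simp only [Pi.sub_apply, Pi.smul_apply, smul_eq_mul]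
          ring
        · rw [if_neg hjm]
          apply Finset.sum_eq_zero
          intro i hi
          rw [hprod]
          have hiL : i < L + 1 := Finset.mem_range.1 hi
          simp only [hidx_div j i hiL, hjm, if_false, if_neg]
      rw [Finset.sum_congr rfl (fun j hj => hinner j (Finset.mem_range.1 hj))]
      have hcollapse : ∑ j ∈ Finset.range K,
          (if j < mm then (E j).indicator a x - mval j * u x₀ x else 0)
          = ∑ j ∈ Finset.range mm, ((E j).indicator a x - mval j * u x₀ x) := by
        rw [← Finset.sum_subset (Finset.range_subset_range.2 hmmK)]
        · apply Finset.sum_congr rfl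
          intro j hj
          rw [if_pos (Finset.mem_range.1 hj)]
        · intro j _ hj
          rw [if_neg (fun h => hj (Finset.mem_range.2 h))]
      rw [hcollapse, Finset.sum_sub_distrib, ← Finset.sum_mul, hmsum, zero_mul, sub_zero,
        hpart x]
    refine ⟨lam, at', hatoms, hlambd, hpoint, ?_⟩
    have hle := aux_hardy_le μ r c N a lam at' hatoms hpoint hzeroatom
    refine hle.trans ?_
    calc ∑ n ∈ Finset.range N, |lam n| ≤ ∑ n ∈ Finset.range N, C :=
        Finset.sum_le_sum (fun n hn => hlambd n (Finset.mem_range.1 hn))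
      _ = N * C := by rw [Finset.sum_const, Finset.card_range, nsmul_eq_mul]
      _ = C * N := mul_comm _ _
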